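/- Let S, B ⊆ ℝ² be sets such that for every (x,y) ∈ S there exist r > 0 and signs ε₁, ε₂ ∈ {−1, 1} with (x + ε₁·r, y + ε₂·r) ∈ B (i.e., B contains at least one vertex of an axes-parallel square with center (x,y)). Then dimH B ≥ dimH S − 1. -/

import Mathlib

open Set Filter MeasureTheory EMetric ENNReal
open scoped Topology NNReal

lemma diam_prod_le' {α β : Type*} [PseudoEMetricSpace α] [PseudoEMetricSpace β]
    (s : Set α) (t : Set β) : EMetric.diam (s ×ˢ t) ≤ max (EMetric.diam s) (EMetric.diam t) :=
  EMetric.diam_le fun x hx y hy => by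
    rw [Prod.edist_eq]
    exact max_le_max (edist_le_diam_of_mem hx.1 hy.1) (edist_le_diam_of_mem hx.2 hy.2)

lemma prod_Icc_null {B : Set (ℝ × ℝ)} {d : ℝ≥0} (hd : 0 < d)
    (hB : μH[(d : ℝ)] B = 0) (a : ℝ) :
    μH[(d : ℝ) + 1] (B ×ˢ Set.Icc a (a + 1)) = 0 := by
  have hd' : (0 : ℝ) < (d : ℝ) := by exact_mod_cast hd
  set ρ : ℕ → ℝ≥0∞ := fun j => 2⁻¹ ^ j with hρ
  have hρpos : ∀ j, 0 < ρ j := fun j => ENNReal.pow_pos (by simp) j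
  have hρ1 : ∀ j, ρ j ≤ 1 := fun j => pow_le_one₀ zero_le (by simp)
  have hρtop : ∀ j, ρ j ≠ ∞ := fun j => ((hρ1 j).trans_lt one_lt_top).ne
  -- obtain covers of B
  have hcov : ∀ j : ℕ, ∃ u : ℕ → Set (ℝ × ℝ), (B ⊆ ⋃ n, u n) ∧
      (∀ n, EMetric.diam (u n) ≤ ρ j) ∧ ∑' n, EMetric.diam (u n) ^ (d : ℝ) ≤ ρ j := by
    intro j
    rw [Measure.hausdorffMeasure_apply] at hB
    have h1 : (⨅ (t : ℕ → Set (ℝ × ℝ)) (_ : B ⊆ ⋃ n, t n) (_ : ∀ n, EMetric.diam (t n) ≤ ρ j),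
        ∑' n, ⨆ _ : (t n).Nonempty, EMetric.diam (t n) ^ (d : ℝ)) = 0 := by
      refine le_antisymm ?_ zero_le
      calc _ ≤ _ := le_iSup₂ (f := fun (r : ℝ≥0∞) (_ : 0 < r) =>
            ⨅ (t : ℕ → Set (ℝ × ℝ)) (_ : B ⊆ ⋃ n, t n) (_ : ∀ n, EMetric.diam (t n) ≤ r),
              ∑' n, ⨆ _ : (t n).Nonempty, EMetric.diam (t n) ^ (d : ℝ)) (ρ j) (hρpos j)
        _ = 0 := hB
    have h2 : (⨅ (t : ℕ → Set (ℝ × ℝ)) (_ : B ⊆ ⋃ n, t n) (_ : ∀ n, EMetric.diam (t n) ≤ ρ j),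
        ∑' n, ⨆ _ : (t n).Nonempty, EMetric.diam (t n) ^ (d : ℝ)) < ρ j := by
      rw [h1]; exact hρpos j
    simp only [iInf_lt_iff] at h2
    obtain ⟨u, hu1, hu2, hu3⟩ := h2
    refine ⟨u, hu1, hu2, le_trans (ENNReal.tsum_le_tsum fun n => ?_) hu3.le⟩
    rcases eq_empty_or_nonempty (u n) with he | hne
    · simp [he, EMetric.diam, Metric.ediam_empty, ENNReal.zero_rpow_of_pos hd']
    · exact le_iSup (fun _ : (u n).Nonempty => EMetric.diam (u n) ^ (d : ℝ)) hne
  choose u hucov hudiam husum using hcov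
  -- the auxiliary lengths
  set σ : ℕ → ℕ → ℝ≥0∞ := fun j n => min ((ρ j * 2⁻¹ ^ n) ^ (1 / (d : ℝ))) (ρ j) with hσ
  have hσpos : ∀ j n, 0 < σ j n := fun j n => lt_min
    (ENNReal.rpow_pos (ENNReal.mul_pos (hρpos j).ne' (ENNReal.pow_pos (by simp) n).ne')
      (ENNReal.mul_ne_top (hρtop j) (by simp))) (hρpos j)
  set D : ℕ → ℕ → ℝ≥0∞ := fun j n => max (EMetric.diam (u j n)) (σ j n) with hD
  have hDρ : ∀ j n, D j n ≤ ρ j := fun j n => max_le (hudiam j n) (min_le_right _ _)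
  have hDpos : ∀ j n, 0 < D j n := fun j n => (hσpos j n).trans_le (le_max_right _ _)
  have hD1 : ∀ j n, D j n ≤ 1 := fun j n => (hDρ j n).trans (hρ1 j)
  have hDtop : ∀ j n, D j n ≠ ∞ := fun j n => ((hD1 j n).trans_lt one_lt_top).ne
  have hD'pos : ∀ j n, 0 < (D j n).toReal := fun j n =>
    ENNReal.toReal_pos (hDpos j n).ne' (hDtop j n)
  have hofReal : ∀ j n, ENNReal.ofReal (D j n).toReal = D j n := fun j n =>
    ENNReal.ofReal_toReal (hDtop j n)
  -- the covering pieces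
  set v : ∀ _ : ℕ, ℕ × ℕ → Set ((ℝ × ℝ) × ℝ) := fun j i =>
    u j i.1 ×ˢ (Set.Icc (a + i.2 * (D j i.1).toReal) (a + (i.2 + 1) * (D j i.1).toReal)
      ∩ Set.Icc a (a + 1)) with hv
  have hIccdiam : ∀ j n (k : ℕ),
      EMetric.diam (Set.Icc (a + k * (D j n).toReal) (a + (k + 1) * (D j n).toReal)
        ∩ Set.Icc a (a + 1)) ≤ D j n := by
    intro j n k
    refine le_trans (EMetric.diam_mono inter_subset_left) ?_
    rw [Real.ediam_Icc]
    rw [show a + (k + 1) * (D j n).toReal - (a + k * (D j n).toReal) = (D j n).toReal by ring]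
    rw [hofReal]
  have hvdiam : ∀ j i, EMetric.diam (v j i) ≤ D j i.1 := by
    intro j i
    exact le_trans (diam_prod_le' _ _) (max_le (le_max_left _ _)
      ((hIccdiam j i.1 i.2).trans le_rfl))
  have hvρ : ∀ j i, EMetric.diam (v j i) ≤ ρ j := fun j i => (hvdiam j i).trans (hDρ j i.1)
  -- covering property
  have hvcov : ∀ j, B ×ˢ Set.Icc a (a + 1) ⊆ ⋃ i, v j i := by
    intro j p hp
    obtain ⟨hp1, hp2⟩ := hp
    obtain ⟨_, ⟨n, rfl⟩, hn⟩ := hucov j hp1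
    have hD'p := hD'pos j n
    refine mem_iUnion.2 ⟨(n, ⌊(p.2 - a) / (D j n).toReal⌋₊), hn, ⟨?_, ?_⟩, hp2⟩
    · have h1 : (⌊(p.2 - a) / (D j n).toReal⌋₊ : ℝ) ≤ (p.2 - a) / (D j n).toReal :=
        Nat.floor_le (by apply div_nonneg _ hD'p.le; linarith [hp2.1])
      have := (le_div_iff₀ hD'p).1 h1
      simp only []
      linarith
    · have h1 : (p.2 - a) / (D j n).toReal < ⌊(p.2 - a) / (D j n).toReal⌋₊ + 1 :=
        Nat.lt_floor_add_one _
      have := (div_lt_iff₀ hD'p).1 h1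
      simp only []
      linarith
  -- sum estimate
  have hsum : ∀ j, ∑' i : ℕ × ℕ, EMetric.diam (v j i) ^ ((d : ℝ) + 1) ≤ 6 * ρ j := by
    intro j
    rw [ENNReal.tsum_prod']
    have inner : ∀ n, ∑' k : ℕ, EMetric.diam (v j (n, k)) ^ ((d : ℝ) + 1)
        ≤ 2 * (EMetric.diam (u j n) ^ (d : ℝ) + σ j n ^ (d : ℝ)) := by
      intro n
      have hD'p := hD'pos j n
      calc ∑' k : ℕ, EMetric.diam (v j (n, k)) ^ ((d : ℝ) + 1)
          ≤ ∑' k : ℕ, (if k ≤ ⌊1 / (D j n).toReal⌋₊ then D j n ^ ((d : ℝ) + 1) else 0) := by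
            refine ENNReal.tsum_le_tsum fun k => ?_
            by_cases hcase : (k : ℝ) * (D j n).toReal ≤ 1
            · rw [if_pos (Nat.le_floor ((le_div_iff₀ hD'p).2 hcase))]
              exact ENNReal.rpow_le_rpow (hvdiam j (n, k)) (by positivity)
            · rw [if_neg (fun hkK =>
                hcase ((le_div_iff₀ hD'p).1 ((Nat.le_floor_iff (by positivity)).1 hkK)))]
              have hempty : v j (n, k) = ∅ := by
                have he2 : Set.Icc (a + k * (D j n).toReal) (a + (k + 1) * (D j n).toReal)
                    ∩ Set.Icc a (a + 1) = ∅ := by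
                  rw [Set.eq_empty_iff_forall_notMem]
                  rintro t ⟨⟨h1, _⟩, _, h4⟩
                  push_neg at hcase
                  nlinarith
                simp [hv, he2]
              rw [hempty]
              simp [EMetric.diam, Metric.ediam_empty, ENNReal.zero_rpow_of_pos (by positivity : (0:ℝ) < (d : ℝ) + 1)]
        _ = ((⌊1 / (D j n).toReal⌋₊ + 1 : ℕ) : ℝ≥0∞) * D j n ^ ((d : ℝ) + 1) := by
            rw [tsum_eq_sum (s := Finset.range (⌊1 / (D j n).toReal⌋₊ + 1))
              (fun k hk => if_neg (fun hle => hk (Finset.mem_range.2 (Nat.lt_succ_of_le hle))))]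
            rw [Finset.sum_congr rfl
              (fun k hk => if_pos (Nat.lt_succ_iff.1 (Finset.mem_range.1 hk)))]
            rw [Finset.sum_const, Finset.card_range, nsmul_eq_mul]
        _ ≤ (1 / D j n + 1) * D j n ^ ((d : ℝ) + 1) := by
            refine mul_le_mul_left ?_ _
            push_cast
            refine add_le_add ?_ le_rfl
            have h1 : ((⌊1 / (D j n).toReal⌋₊ : ℕ) : ℝ) ≤ 1 / (D j n).toReal :=
              Nat.floor_le (by positivity)
            rw [show ((⌊1 / (D j n).toReal⌋₊ : ℕ) : ℝ≥0∞)
              = ENNReal.ofReal ((⌊1 / (D j n).toReal⌋₊ : ℕ) : ℝ) by rw [ENNReal.ofReal_natCast]]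
            calc ENNReal.ofReal ((⌊1 / (D j n).toReal⌋₊ : ℕ) : ℝ)
                ≤ ENNReal.ofReal (1 / (D j n).toReal) := ENNReal.ofReal_le_ofReal h1
              _ = ENNReal.ofReal 1 / ENNReal.ofReal (D j n).toReal :=
                  ENNReal.ofReal_div_of_pos hD'p
              _ = 1 / D j n := by rw [ENNReal.ofReal_one, hofReal]
        _ = 1 / D j n * D j n ^ ((d : ℝ) + 1) + D j n ^ ((d : ℝ) + 1) := by ring
        _ ≤ D j n ^ (d : ℝ) + D j n ^ (d : ℝ) := by
            refine add_le_add ?_ (ENNReal.rpow_le_rpow_of_exponent_ge (hD1 j n) (by linarith))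
            rw [ENNReal.rpow_add _ _ (hDpos j n).ne' (hDtop j n), ENNReal.rpow_one]
            rw [show 1 / D j n * (D j n ^ (d : ℝ) * D j n)
              = D j n ^ (d : ℝ) * (D j n * (1 / D j n)) by ring]
            rw [mul_one_div, ENNReal.div_self (hDpos j n).ne' (hDtop j n), mul_one]
        _ = 2 * D j n ^ (d : ℝ) := by ring
        _ ≤ 2 * (EMetric.diam (u j n) ^ (d : ℝ) + σ j n ^ (d : ℝ)) := by
            refine mul_le_mul_right ?_ 2
            rcases max_cases (EMetric.diam (u j n)) (σ j n) with ⟨hmax, _⟩ | ⟨hmax, _⟩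
            · rw [hD]; simp only [hmax]; exact le_self_add
            · rw [hD]; simp only [hmax]; exact le_add_self
    calc ∑' n, ∑' k : ℕ, EMetric.diam (v j (n, k)) ^ ((d : ℝ) + 1)
        ≤ ∑' n, 2 * (EMetric.diam (u j n) ^ (d : ℝ) + σ j n ^ (d : ℝ)) :=
          ENNReal.tsum_le_tsum inner
      _ = 2 * (∑' n, EMetric.diam (u j n) ^ (d : ℝ) + ∑' n, σ j n ^ (d : ℝ)) := by
          rw [ENNReal.tsum_mul_left, ENNReal.tsum_add]
      _ ≤ 2 * (ρ j + 2 * ρ j) := by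
          refine mul_le_mul_right (add_le_add (husum j) ?_) 2
          calc ∑' n, σ j n ^ (d : ℝ)
              ≤ ∑' n : ℕ, ρ j * 2⁻¹ ^ n := by
                refine ENNReal.tsum_le_tsum fun n => ?_
                calc σ j n ^ (d : ℝ)
                    ≤ ((ρ j * 2⁻¹ ^ n) ^ (1 / (d : ℝ))) ^ (d : ℝ) :=
                      ENNReal.rpow_le_rpow (min_le_left _ _) hd'.le
                  _ = (ρ j * 2⁻¹ ^ n) ^ (1 / (d : ℝ) * (d : ℝ)) := by
                      rw [← ENNReal.rpow_mul]
                  _ = ρ j * 2⁻¹ ^ n := by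
                      rw [one_div_mul_cancel hd'.ne', ENNReal.rpow_one]
            _ = ρ j * 2 := by
                rw [ENNReal.tsum_mul_left, ENNReal.tsum_geometric]
                congr 1
                rw [ENNReal.one_sub_inv_two]
                simp
            _ = 2 * ρ j := mul_comm _ _
      _ = 6 * ρ j := by ring
  -- conclude
  have hmain : μH[(d : ℝ) + 1] (B ×ˢ Set.Icc a (a + 1))
      ≤ liminf (fun j => ∑' i : ℕ × ℕ, EMetric.diam (v j i) ^ ((d : ℝ) + 1)) atTop := by
    refine Measure.hausdorffMeasure_le_liminf_tsum _ _ (r := ρ) ?_ v ?_ ?_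
    · exact ENNReal.tendsto_pow_atTop_nhds_zero_of_lt_one (by simp [ENNReal.inv_lt_one])
    · exact Eventually.of_forall fun j i => hvρ j i
    · exact Eventually.of_forall hvcov
  have hlim : liminf (fun j => ∑' i : ℕ × ℕ, EMetric.diam (v j i) ^ ((d : ℝ) + 1)) atTop = 0 := by
    refine le_antisymm ?_ zero_le
    calc liminf (fun j => ∑' i : ℕ × ℕ, EMetric.diam (v j i) ^ ((d : ℝ) + 1)) atTop
        ≤ liminf (fun j => 6 * ρ j) atTop := liminf_le_liminf (Eventually.of_forall hsum)
      _ = 0 := by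
          refine Tendsto.liminf_eq ?_
          have := ENNReal.Tendsto.const_mul
            (a := (6 : ℝ≥0∞))
            (ENNReal.tendsto_pow_atTop_nhds_zero_of_lt_one
              (r := (2 : ℝ≥0∞)⁻¹) (by simp [ENNReal.inv_lt_one]))
            (Or.inr (by simp))
          simpa using this
  rw [← nonpos_iff_eq_zero]
  calc μH[(d : ℝ) + 1] (B ×ˢ Set.Icc a (a + 1)) ≤ _ := hmain
    _ = 0 := hlim

theorem stmt7 (S B : Set (ℝ × ℝ))
    (h : ∀ p ∈ S, ∃ r > (0:ℝ), ∃ ε₁ ∈ ({-1, 1} : Set ℝ), ∃ ε₂ ∈ ({-1, 1} : Set ℝ),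
      (p.1 + ε₁ * r, p.2 + ε₂ * r) ∈ B) :
    dimH S - 1 ≤ dimH B := by
  classical
  have h11 : LipschitzWith 1 (fun x : (ℝ × ℝ) × ℝ => x.1.1) := by
    simpa [Function.comp_def] using LipschitzWith.prod_fst.comp (LipschitzWith.prod_fst (α := ℝ × ℝ) (β := ℝ))
  have h12 : LipschitzWith 1 (fun x : (ℝ × ℝ) × ℝ => x.1.2) := by
    simpa [Function.comp_def] using LipschitzWith.prod_snd.comp (LipschitzWith.prod_fst (α := ℝ × ℝ) (β := ℝ))
  have h2 : LipschitzWith 1 (fun x : (ℝ × ℝ) × ℝ => x.2) := LipschitzWith.prod_snd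
  set g₁ : (ℝ × ℝ) × ℝ → ℝ × ℝ := fun x => (x.1.1 + x.2, x.1.2 + x.2) with hg₁def
  set g₂ : (ℝ × ℝ) × ℝ → ℝ × ℝ := fun x => (x.1.1 + x.2, x.1.2 - x.2) with hg₂def
  have hg₁ : LipschitzWith 2 g₁ := by
    have := (h11.add h2).prodMk (h12.add h2)
    norm_num at this
    exact this
  have hg₂ : LipschitzWith 2 g₂ := by
    have := (h11.add h2).prodMk (h12.sub h2)
    norm_num at this
    exact this
  have hcover : S ⊆ g₁ '' (B ×ˢ (univ : Set ℝ)) ∪ g₂ '' (B ×ˢ (univ : Set ℝ)) := by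
    rintro ⟨x, y⟩ hp
    obtain ⟨r, hr, ε₁, hε₁, ε₂, hε₂, hq⟩ := h _ hp
    simp only [Set.mem_insert_iff, Set.mem_singleton_iff] at hε₁ hε₂
    rcases hε₁ with rfl | rfl <;> rcases hε₂ with rfl | rfl
    · exact Or.inl ⟨((x + (-1) * r, y + (-1) * r), r), ⟨hq, trivial⟩,
        by simp only [hg₁def, Prod.mk.injEq]; constructor <;> ring⟩
    · exact Or.inr ⟨((x + (-1) * r, y + 1 * r), r), ⟨hq, trivial⟩,
        by simp only [hg₂def, Prod.mk.injEq]; constructor <;> ring⟩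
    · exact Or.inr ⟨((x + 1 * r, y + (-1) * r), -r), ⟨hq, trivial⟩,
        by simp only [hg₂def, Prod.mk.injEq]; constructor <;> ring⟩
    · exact Or.inl ⟨((x + 1 * r, y + 1 * r), -r), ⟨hq, trivial⟩,
        by simp only [hg₁def, Prod.mk.injEq]; constructor <;> ring⟩
  have key : ∀ d : ℝ≥0, dimH B < (d : ℝ≥0∞) → dimH S ≤ (d : ℝ≥0∞) + 1 := by
    intro d hd
    have hd0 : 0 < d := by
      rcases eq_or_lt_of_le (zero_le : 0 ≤ d) with h0 | h0
      · exfalso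
        rw [← h0] at hd
        simp at hd
      · exact h0
    have hB0 : μH[(d : ℝ)] B = 0 := hausdorffMeasure_of_dimH_lt hd
    have hnull : μH[(d : ℝ) + 1] (B ×ˢ (univ : Set ℝ)) = 0 := by
      have heq : B ×ˢ (univ : Set ℝ) = ⋃ n : ℤ, B ×ˢ Set.Icc (n : ℝ) (n + 1) := by
        rw [← Set.prod_iUnion, iUnion_Icc_intCast]
      rw [heq]
      exact measure_iUnion_null fun n => prod_Icc_null hd0 hB0 _
    have hdimprod : dimH (B ×ˢ (univ : Set ℝ)) ≤ (d : ℝ≥0∞) + 1 := by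
      have h0 : μH[((d + 1 : ℝ≥0) : ℝ)] (B ×ˢ (univ : Set ℝ)) ≠ ∞ := by
        rw [show ((d + 1 : ℝ≥0) : ℝ) = (d : ℝ) + 1 by push_cast; ring, hnull]
        simp
      have := dimH_le_of_hausdorffMeasure_ne_top h0
      calc dimH (B ×ˢ (univ : Set ℝ)) ≤ ((d + 1 : ℝ≥0) : ℝ≥0∞) := this
        _ = (d : ℝ≥0∞) + 1 := by push_cast; ring
    calc dimH S ≤ dimH (g₁ '' (B ×ˢ (univ : Set ℝ)) ∪ g₂ '' (B ×ˢ (univ : Set ℝ))) :=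
        dimH_mono hcover
      _ = max (dimH (g₁ '' (B ×ˢ (univ : Set ℝ)))) (dimH (g₂ '' (B ×ˢ (univ : Set ℝ)))) :=
        dimH_union _ _
      _ ≤ (d : ℝ≥0∞) + 1 := max_le ((hg₁.dimH_image_le _).trans hdimprod)
          ((hg₂.dimH_image_le _).trans hdimprod)
  rw [tsub_le_iff_right]
  rcases eq_top_or_lt_top (dimH B) with htop | hlt
  · rw [htop]
    simp
  · refine ENNReal.le_of_forall_pos_le_add fun ε hε _ => ?_
    have hfin := hlt.ne
    have hb : dimH B = ((dimH B).toNNReal : ℝ≥0∞) := (ENNReal.coe_toNNReal hfin).symm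
    have hlt2 : dimH B < (((dimH B).toNNReal + ε : ℝ≥0) : ℝ≥0∞) := by
      rw [hb]
      exact_mod_cast lt_add_of_pos_right _ hε
    calc dimH S ≤ (((dimH B).toNNReal + ε : ℝ≥0) : ℝ≥0∞) + 1 := key _ hlt2
      _ = dimH B + 1 + ε := by push_cast; rw [← hb]; ring
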